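/- If π is a simple permutation, w is a strict pin word corresponding to a permutation σ, u is a quasi-strict pin word corresponding to π, and φ(u₂…u_{|u|}) is a factor of φ(w) beginning at position p ≥ 3, then π is a pattern of σ. -/

import Mathlib

namespace PinWords

inductive Letter | N1 | N2 | N3 | N4 | U | D | L | R
  deriving DecidableEq

open Letter

def isNumeral : Letter → Prop
  | N1 | N2 | N3 | N4 => True
  | _ => False

def isDir : Letter → Prop
  | U | D | L | R => True
  | _ => False

def isVert : Letter → Prop
  | U | D => True
  | _ => False

def isHoriz : Letter → Prop
  | L | R => True
  | _ => False

/-- Consecutive letters alternate between the horizontal class {L,R}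
and the vertical class {U,D}. -/
def Alternating : List Letter → Prop
  | a :: b :: rest => ((isHoriz a ∧ isVert b) ∨ (isVert a ∧ isHoriz b)) ∧ Alternating (b :: rest)
  | _ => True

/-- A strict pin word: a numeral followed by a nonempty alternating sequence of directions. -/
def StrictPinWord : List Letter → Prop
  | c :: rest => isNumeral c ∧ rest ≠ [] ∧ (∀ x ∈ rest, isDir x) ∧ Alternating rest
  | [] => False

/-- A quasi-strict pin word: two numerals followed by alternating directions. -/
def QuasiStrictPinWord : List Letter → Prop
  | c :: d :: rest => isNumeral c ∧ isNumeral d ∧ (∀ x ∈ rest, isDir x) ∧ Alternating rest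
  | _ => False

/-- The set M : alternating direction words of length at least 3. -/
def InM (w : List Letter) : Prop :=
  3 ≤ w.length ∧ (∀ c ∈ w, isDir c) ∧ Alternating w

/-- The table defining φ on the first two letters. -/
def varphi : Letter → Letter → List Letter
  | N1, R => [R, U, R] | N2, R => [L, U, R] | N3, R => [L, D, R] | N4, R => [R, D, R]
  | N1, L => [R, U, L] | N2, L => [L, U, L] | N3, L => [L, D, L] | N4, L => [R, D, L]
  | N1, U => [U, R, U] | N2, U => [U, L, U] | N3, U => [D, L, U] | N4, U => [D, R, U]
  | N1, D => [U, R, D] | N2, D => [U, L, D] | N3, D => [D, L, D] | N4, D => [D, R, D]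
  | a, b => [a, b]

/-- The map φ : replace the first two letters according to the table, keep the rest. -/
def phi : List Letter → List Letter
  | a :: b :: rest => varphi a b ++ rest
  | w => w

/-- φ⁻¹ on two-letter direction words, giving a numeral. -/
def phiInv2 : Letter → Letter → Letter
  | R, U => N1 | U, R => N1
  | L, U => N2 | U, L => N2
  | L, D => N3 | D, L => N3
  | R, D => N4 | D, R => N4
  | _, _ => N1

/-- The quadrant function q on pairs of consecutive letters of a pin word. -/
def qfun (a b : Letter) : Letter :=
  match a with
  | N1 | N2 | N3 | N4 =>
    match varphi a b with
    | [_, x, y] => phiInv2 x y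
    | _ => N1
  | _ => phiInv2 a b

/-- A strong numeral-led factor: a numeral followed by directions. -/
def IsSNLF : List Letter → Prop
  | c :: rest => isNumeral c ∧ ∀ x ∈ rest, isDir x
  | [] => False

/-- The order ≼ on pin words of Brignall, Ruškuc and Vatter, via strong
numeral-led factor decompositions.  Each element of `t` is a triple
`(uᵢ, vᵢ, wᵢ)`. -/
def PinOrder (u w : List Letter) : Prop :=
  ∃ (t : List (List Letter × List Letter × List Letter)) (vfin : List Letter),
    u = (t.map fun x => x.1).flatten ∧
    w = (t.map fun x => x.2.1 ++ x.2.2).flatten ++ vfin ∧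
    ∀ x ∈ t, IsSNLF x.1 ∧
      ((∃ c rest, x.2.2 = c :: rest ∧ isNumeral c ∧ x.2.2 = x.1) ∨
       (∃ c rest l uc, x.2.2 = c :: rest ∧ isDir c ∧ x.2.1.getLast? = some l ∧
          x.1 = uc :: rest ∧ qfun l c = uc))

/-! ### Pin sequences in the plane -/

abbrev Pt := ℤ × ℤ

def SepVert (c : Pt) (P Q : Set Pt) : Prop :=
  ((∀ a ∈ P, a.1 < c.1) ∧ (∀ b ∈ Q, c.1 < b.1)) ∨
  ((∀ a ∈ P, c.1 < a.1) ∧ (∀ b ∈ Q, b.1 < c.1))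

def SepHoriz (c : Pt) (P Q : Set Pt) : Prop :=
  ((∀ a ∈ P, a.2 < c.2) ∧ (∀ b ∈ Q, c.2 < b.2)) ∨
  ((∀ a ∈ P, c.2 < a.2) ∧ (∀ b ∈ Q, b.2 < c.2))

/-- A horizontal or vertical line through `c` separates `P` from `Q`. -/
def Separates (c : Pt) (P Q : Set Pt) : Prop := SepVert c P Q ∨ SepHoriz c P Q

/-- `c` does not separate `S` into two nonempty parts. -/
def Independent (c : Pt) (S : Set Pt) : Prop :=
  ¬((∃ a ∈ S, a.1 < c.1) ∧ (∃ a ∈ S, c.1 < a.1)) ∧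
  ¬((∃ a ∈ S, a.2 < c.2) ∧ (∃ a ∈ S, c.2 < a.2))

/-- `c` lies in the bounding box of `S`. -/
def InBox (S : Set Pt) (c : Pt) : Prop :=
  (∃ a ∈ S, a.1 ≤ c.1) ∧ (∃ a ∈ S, c.1 ≤ a.1) ∧ (∃ a ∈ S, a.2 ≤ c.2) ∧ (∃ a ∈ S, c.2 ≤ a.2)

def DistinctCoords {n : ℕ} (p : Fin n → Pt) : Prop :=
  ∀ i j, i ≠ j → (p i).1 ≠ (p j).1 ∧ (p i).2 ≠ (p j).2

/-- The set of points `p j` for `j < i`. -/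
def prevSet {n : ℕ} (p : Fin n → Pt) (i : ℕ) : Set Pt := {x | ∃ j : Fin n, j.val < i ∧ x = p j}

/-- A pin sequence (0-indexed): each pin lies outside the bounding box of the
previous ones and either separates the previous pin from the earlier ones, or
is independent. -/
def IsPinSeq {n : ℕ} (p : Fin n → Pt) : Prop :=
  DistinctCoords p ∧
  ∀ i : Fin n, 1 ≤ i.val →
    ¬ InBox (prevSet p i.val) (p i) ∧
    (Separates (p i) {x | ∃ j : Fin n, j.val + 1 = i.val ∧ x = p j} (prevSet p (i.val - 1)) ∨
     Independent (p i) (prevSet p i.val))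

/-- A proper pin sequence: from the third pin on, each pin separates the
previous pin from the earlier ones. -/
def IsProperPinSeq {n : ℕ} (p : Fin n → Pt) : Prop :=
  IsPinSeq p ∧
  ∀ i : Fin n, 2 ≤ i.val →
    Separates (p i) {x | ∃ j : Fin n, j.val + 1 = i.val ∧ x = p j} (prevSet p (i.val - 1))

/-- The sequence of points `p` is order isomorphic to the diagram of `σ`. -/
def RepresentsPerm {k m : ℕ} (p : Fin k → Pt) (σ : Equiv.Perm (Fin m)) : Prop :=
  ∃ e : Fin k ≃ Fin m, ∀ i j : Fin k,
    ((p i).1 < (p j).1 ↔ e i < e j) ∧ ((p i).2 < (p j).2 ↔ σ (e i) < σ (e j))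

def IsIntervalSet {n : ℕ} (S : Set (Fin n)) : Prop :=
  ∀ a ∈ S, ∀ b ∈ S, ∀ c, a ≤ c → c ≤ b → c ∈ S

/-- A simple permutation: no nontrivial block. -/
def IsSimplePerm {n : ℕ} (σ : Equiv.Perm (Fin n)) : Prop :=
  ∀ S : Set (Fin n), IsIntervalSet S → IsIntervalSet (σ '' S) → S.ncard ≤ 1 ∨ S = Set.univ

/-- Pattern containment of permutations. -/
def IsPattern {k n : ℕ} (π : Equiv.Perm (Fin k)) (σ : Equiv.Perm (Fin n)) : Prop :=
  ∃ f : Fin k → Fin n, StrictMono f ∧ ∀ i j : Fin k, π i < π j ↔ σ (f i) < σ (f j)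

/-- The meaning of a letter of a pin word: `prev` is the set of all earlier
points (including the origin), `prevPin` is the previous pin, `older` is
`prev` minus the previous pin. -/
def LetterEncodes (c : Letter) (pt : Pt) (prev prevPin older : Set Pt) : Prop :=
  match c with
  | U => (∀ a ∈ prev, a.2 < pt.2) ∧ SepVert pt prevPin older
  | D => (∀ a ∈ prev, pt.2 < a.2) ∧ SepVert pt prevPin older
  | L => (∀ a ∈ prev, pt.1 < a.1) ∧ SepHoriz pt prevPin older
  | R => (∀ a ∈ prev, a.1 < pt.1) ∧ SepHoriz pt prevPin older
  | N1 => Independent pt prev ∧ ∀ a ∈ prev, a.1 < pt.1 ∧ a.2 < pt.2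
  | N2 => Independent pt prev ∧ ∀ a ∈ prev, pt.1 < a.1 ∧ a.2 < pt.2
  | N3 => Independent pt prev ∧ ∀ a ∈ prev, pt.1 < a.1 ∧ pt.2 < a.2
  | N4 => Independent pt prev ∧ ∀ a ∈ prev, a.1 < pt.1 ∧ pt.2 < a.2

/-- The word `w` encodes the extended pin sequence `p₀, p₁, …, p_n`
(the origin is `p 0`). -/
def Encodes (w : List Letter) (p : Fin (w.length + 1) → Pt) : Prop :=
  DistinctCoords p ∧
  ∀ k : Fin w.length,
    LetterEncodes (w.get k) (p k.succ)
      (prevSet p (k.val + 1))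
      {x | ∃ j : Fin (w.length + 1), j.val = k.val ∧ x = p j}
      (prevSet p k.val)

/-- The pin word `w` corresponds to the permutation `σ`. -/
def WordRepresents (w : List Letter) {m : ℕ} (σ : Equiv.Perm (Fin m)) : Prop :=
  ∃ p : Fin (w.length + 1) → Pt, Encodes w p ∧
    RepresentsPerm (fun i : Fin w.length => p i.succ) σ

/-- A proper pin-permutation: one admitting a proper pin representation. -/
def ProperPinPerm {n : ℕ} (σ : Equiv.Perm (Fin n)) : Prop :=
  ∃ p : Fin n → Pt, IsProperPinSeq p ∧ RepresentsPerm p σ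

/-- `pt` lies in the quadrant named by the numeral `c` of the bounding box of `S`. -/
def InQuadrant (c : Letter) (pt : Pt) (S : Set Pt) : Prop :=
  match c with
  | N1 => ∀ a ∈ S, a.1 < pt.1 ∧ a.2 < pt.2
  | N2 => ∀ a ∈ S, pt.1 < a.1 ∧ a.2 < pt.2
  | N3 => ∀ a ∈ S, pt.1 < a.1 ∧ pt.2 < a.2
  | N4 => ∀ a ∈ S, a.1 < pt.1 ∧ pt.2 < a.2
  | _ => False

/-- Two points are in knight position. -/
def Knight (a b : Pt) : Prop :=
  (|a.1 - b.1| = 1 ∧ |a.2 - b.2| = 2) ∨ (|a.1 - b.1| = 2 ∧ |a.2 - b.2| = 1)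

/-- The set E(π) of forbidden factors associated to a simple permutation π. -/
def Epi {m : ℕ} (π : Equiv.Perm (Fin m)) : Set (List Letter) :=
  {v | ∃ u, StrictPinWord u ∧ WordRepresents u π ∧ v = phi u} ∪
  {v | ∃ u x, QuasiStrictPinWord u ∧ WordRepresents u π ∧
      x.length = 2 ∧ (∀ c ∈ x, isDir c) ∧ v = x ++ phi u.tail ∧ Alternating v}


/-! ### Auxiliary lemmas for the proof of `pattern_of_factor` -/

lemma sepV_lt {X PP o : Pt} {Ps O : Set Pt} (h : SepVert X Ps O) (hPP : PP ∈ Ps)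
    (ho : o ∈ O) (hside : o.1 < PP.1) : X.1 < PP.1 ∧ ∀ b ∈ O, b.1 < X.1 := by
  rcases h with ⟨h1, h2⟩ | ⟨h1, h2⟩
  · exact absurd hside (by have := h1 PP hPP; have := h2 o ho; omega)
  · exact ⟨h1 PP hPP, h2⟩

lemma sepV_gt {X PP o : Pt} {Ps O : Set Pt} (h : SepVert X Ps O) (hPP : PP ∈ Ps)
    (ho : o ∈ O) (hside : PP.1 < o.1) : PP.1 < X.1 ∧ ∀ b ∈ O, X.1 < b.1 := by
  rcases h with ⟨h1, h2⟩ | ⟨h1, h2⟩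
  · exact ⟨h1 PP hPP, h2⟩
  · exact absurd hside (by have := h1 PP hPP; have := h2 o ho; omega)

lemma sepH_lt {X PP o : Pt} {Ps O : Set Pt} (h : SepHoriz X Ps O) (hPP : PP ∈ Ps)
    (ho : o ∈ O) (hside : o.2 < PP.2) : X.2 < PP.2 ∧ ∀ b ∈ O, b.2 < X.2 := by
  rcases h with ⟨h1, h2⟩ | ⟨h1, h2⟩
  · exact absurd hside (by have := h1 PP hPP; have := h2 o ho; omega)
  · exact ⟨h1 PP hPP, h2⟩

lemma sepH_gt {X PP o : Pt} {Ps O : Set Pt} (h : SepHoriz X Ps O) (hPP : PP ∈ Ps)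
    (ho : o ∈ O) (hside : PP.2 < o.2) : PP.2 < X.2 ∧ ∀ b ∈ O, X.2 < b.2 := by
  rcases h with ⟨h1, h2⟩ | ⟨h1, h2⟩
  · exact ⟨h1 PP hPP, h2⟩
  · exact absurd hside (by have := h1 PP hPP; have := h2 o ho; omega)

/-- Totalized version of a `Fin (n+1)`-indexed point sequence. -/
def extPt {n : ℕ} (f : Fin (n + 1) → Pt) : ℕ → Pt :=
  fun s => if h : s < n + 1 then f ⟨s, h⟩ else f 0

lemma extPt_eq {n : ℕ} (f : Fin (n + 1) → Pt) {s : ℕ} (h : s < n + 1) :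
    extPt f s = f ⟨s, h⟩ := dif_pos h

lemma mem_prevSet_ext {n : ℕ} (f : Fin (n + 1) → Pt) {s N : ℕ} (hs : s < N) (hsn : s < n + 1) :
    extPt f s ∈ prevSet f N := ⟨⟨s, hsn⟩, hs, (extPt_eq f hsn)⟩

lemma mem_pin_ext {n : ℕ} (f : Fin (n + 1) → Pt) {s : ℕ} (hsn : s < n + 1) :
    extPt f s ∈ {z | ∃ jj : Fin (n + 1), jj.val = s ∧ z = f jj} := ⟨⟨s, hsn⟩, rfl, extPt_eq f hsn⟩

lemma extPt_ne {n : ℕ} {f : Fin (n + 1) → Pt} (hdc : DistinctCoords f) {s t : ℕ}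
    (hne : s ≠ t) (hs : s < n + 1) (ht : t < n + 1) :
    (extPt f s).1 ≠ (extPt f t).1 ∧ (extPt f s).2 ≠ (extPt f t).2 := by
  rw [extPt_eq f hs, extPt_eq f ht]
  exact hdc _ _ (fun hh => hne (by simpa [Fin.ext_iff] using hh))

lemma encodes_at {w : List Letter} {f : Fin (w.length + 1) → Pt} (h : Encodes w f)
    {n : ℕ} (hn : n < w.length) :
    LetterEncodes (w[n]) (extPt f (n + 1)) (prevSet f (n + 1))
      {z | ∃ jj : Fin (w.length + 1), jj.val = n ∧ z = f jj} (prevSet f n) := by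
  have h2 := h.2 ⟨n, hn⟩
  have e1 : extPt f (n + 1) = f (Fin.succ ⟨n, hn⟩) := extPt_eq f (Nat.succ_lt_succ hn)
  rw [List.get_eq_getElem] at h2
  rw [e1]
  exact h2

lemma varphi_shape {a b : Letter} (ha : isNumeral a) (hb : isDir b) :
    ∃ x y, varphi a b = [x, y, b] := by
  cases a <;> cases b <;> first
    | exact ha.elim
    | exact hb.elim
    | exact ⟨_, _, rfl⟩

lemma getElem_middle {α : Type*} (pre mid post : List α) {t : ℕ} (ht : t < mid.length)
    (hb : pre.length + t < (pre ++ mid ++ post).length) :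
    (pre ++ mid ++ post)[pre.length + t] = mid[t] := by
  have h1 := List.getElem_of_eq (List.append_assoc pre mid post) hb
  rw [h1, List.getElem_append_right (Nat.le_add_right _ _)]
  simp only [Nat.add_sub_cancel_left]
  exact List.getElem_append_left ht

/-- the `q`-side index function -/
def gIdx (j : ℕ) (s : ℕ) : ℕ := if s = 0 then j else j + s + 1

lemma gIdx_zero (j : ℕ) : gIdx j 0 = j := rfl
lemma gIdx_pos (j : ℕ) {s : ℕ} (hs : s ≠ 0) : gIdx j s = j + s + 1 := if_neg hs
lemma gIdx_le (j : ℕ) {s t : ℕ} (hst : s < t) : gIdx j s < gIdx j t + 1 ∧ gIdx j s ≤ j + t := by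
  unfold gIdx; split <;> split <;> omega

lemma getElem_middle' {α : Type*} (pre mid post : List α) {j t : ℕ} (hj : pre.length = j)
    (ht : t < mid.length) (hb : j + t < (pre ++ mid ++ post).length) :
    (pre ++ mid ++ post)[j + t] = mid[t] := by
  subst hj
  exact getElem_middle pre mid post ht hb

/-- if π is simple, w a strict pin word of σ, u a quasi-strict
pin word of π, and φ(u₂…u_|u|) is a factor of φ(w) beginning at position ≥ 3,
then π is a pattern of σ. -/
theorem pattern_of_factor {k m : ℕ} (π : Equiv.Perm (Fin k)) (σ : Equiv.Perm (Fin m))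
    (hsimple : IsSimplePerm π) (w u : List Letter)
    (hw : StrictPinWord w) (hwσ : WordRepresents w σ)
    (hu : QuasiStrictPinWord u) (huπ : WordRepresents u π)
    (h : ∃ a b : List Letter, phi w = a ++ phi u.tail ++ b ∧ 2 ≤ a.length) :
    IsPattern π σ := by
  clear hsimple
  obtain ⟨a, b, hfac, hlen⟩ := h
  cases u with
  | nil => exact hu.elim
  | cons n₀ u1 =>
  cases u1 with
  | nil => exact hu.elim
  | cons n₁ urest =>
  obtain ⟨hn0, hn1, hudir, hualt⟩ := hu
  cases w with
  | nil => exact hw.elim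
  | cons w₀ w1 =>
  obtain ⟨hw0, hne1, hwdir, hwalt⟩ := hw
  cases w1 with
  | nil => exact absurd rfl hne1
  | cons w₁ wr =>
  obtain ⟨x₀, y₀, hv0⟩ := varphi_shape hw0 (hwdir w₁ (by simp))
  have hphiw : phi (w₀ :: w₁ :: wr) = x₀ :: y₀ :: w₁ :: wr := by
    show varphi w₀ w₁ ++ wr = _
    rw [hv0]; rfl
  obtain ⟨a₀, a₁, a2, rfl⟩ : ∃ a₀ a₁ a2, a = a₀ :: a₁ :: a2 := by
    cases a with
    | nil => exact absurd hlen (by simp)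
    | cons a₀ a1 =>
      cases a1 with
      | nil => exact absurd hlen (by simp)
      | cons a₁ a2 => exact ⟨a₀, a₁, a2, rfl⟩
  cases urest with
  | nil =>
    rw [hphiw] at hfac
    have hto : phi (List.tail (n₀ :: n₁ :: ([] : List Letter))) = [n₁] := rfl
    rw [hto] at hfac
    have hfac' : x₀ :: y₀ :: (w₁ :: wr) = a₀ :: a₁ :: (a2 ++ [n₁] ++ b) := by
      simpa using hfac
    injection hfac' with h1 hfac'
    injection hfac' with h2 hfac'
    have hmem : n₁ ∈ w₁ :: wr := by rw [hfac']; simp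
    have hd := hwdir n₁ hmem
    cases n₁ <;> first | exact hn1.elim | exact hd.elim
  | cons d₀ r' =>
  obtain ⟨x, y, hvxy⟩ := varphi_shape hn1 (hudir d₀ (by simp))
  have hphiu : phi (List.tail (n₀ :: n₁ :: d₀ :: r')) = x :: y :: d₀ :: r' := by
    show varphi n₁ d₀ ++ r' = _
    rw [hvxy]; rfl
  rw [hphiw, hphiu] at hfac
  have hfac' : x₀ :: y₀ :: (w₁ :: wr) = a₀ :: a₁ :: (a2 ++ (x :: y :: d₀ :: r') ++ b) := by
    simpa using hfac
  injection hfac' with h1 hfac'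
  injection hfac' with h2 hfac'
  have hwform : w₀ :: w₁ :: wr = (w₀ :: a2) ++ (x :: y :: d₀ :: r') ++ b := by
    rw [hfac']; simp
  set j := a2.length + 1 with hjdef
  have hj1 : 1 ≤ j := by omega
  have hlwe : (w₀ :: w₁ :: wr).length = j + (r'.length + 3) + b.length := by
    have h3 := congrArg List.length hwform
    simp only [List.length_cons, List.length_append, List.cons_append] at h3
    simp only [List.length_cons]
    omega
  have hul : (n₀ :: n₁ :: d₀ :: r').length = r'.length + 3 := by simp
  have hWget : ∀ t, ∀ (ht : t < r'.length + 3), ∀ (hb : j + t < (w₀ :: w₁ :: wr).length),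
      (w₀ :: w₁ :: wr)[j + t] = (x :: y :: d₀ :: r')[t]'(by simp only [List.length_cons]; omega) := by
    intro t ht hb
    have hpre : (w₀ :: a2).length = j := by simp [hjdef]
    have h0 := List.getElem_of_eq hwform hb
    rw [h0]
    exact getElem_middle' (w₀ :: a2) (x :: y :: d₀ :: r') b hpre (by simp only [List.length_cons]; omega)
      (by rw [← hwform]; exact hb)
  have hiu : ∀ t, 2 ≤ t → ∀ (h1 : t < (n₀ :: n₁ :: d₀ :: r').length)
      (h2 : t < (x :: y :: d₀ :: r').length),
      (n₀ :: n₁ :: d₀ :: r')[t] = (x :: y :: d₀ :: r')[t] := by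
    intro t ht h1 h2
    obtain ⟨t', rfl⟩ : ∃ t', t = t' + 2 := ⟨t - 2, by omega⟩
    simp
  have hdir_t : ∀ t, 2 ≤ t → ∀ (h1 : t < (n₀ :: n₁ :: d₀ :: r').length),
      isDir ((n₀ :: n₁ :: d₀ :: r')[t]) := by
    intro t ht h1
    obtain ⟨t', rfl⟩ : ∃ t', t = t' + 2 := ⟨t - 2, by omega⟩
    simp only [List.getElem_cons_succ]
    exact hudir _ (List.getElem_mem _)
  obtain ⟨q, hqE, e_w, he_w⟩ := hwσ
  obtain ⟨p, hpE, e_u, he_u⟩ := huπ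
  have keyOrd : ∀ t, 1 ≤ t → t < r'.length + 3 → ∀ s, s < t →
      (((extPt p (s+1)).1 < (extPt p (t+1)).1 ↔
        (extPt q (gIdx j s)).1 < (extPt q (gIdx j t)).1) ∧
       ((extPt p (s+1)).2 < (extPt p (t+1)).2 ↔
        (extPt q (gIdx j s)).2 < (extPt q (gIdx j t)).2)) := by
    intro t
    induction t using Nat.strong_induction_on with
    | _ t IH =>
    intro ht1 htK s hst
    rcases eq_or_lt_of_le ht1 with h1 | h2
    · -- base case t = 1
      subst h1
      have hs0 : s = 0 := by omega
      subst hs0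
      have hu1 : 1 < (n₀ :: n₁ :: d₀ :: r').length := by omega
      have hbj : j < (w₀ :: w₁ :: wr).length := by omega
      have hbj1 : j + 1 < (w₀ :: w₁ :: wr).length := by omega
      have hp1 := encodes_at hpE hu1
      have hq0 := encodes_at hqE hbj
      have hq1 := encodes_at hqE hbj1
      have e0 : (w₀ :: w₁ :: wr)[j]'hbj = x := by simpa using hWget 0 (by omega) (by omega)
      have e1 : (w₀ :: w₁ :: wr)[j+1]'hbj1 = y := by exact hWget 1 (by omega) (by omega)
      rw [e0] at hq0
      rw [e1] at hq1
      have eu1 : (n₀ :: n₁ :: d₀ :: r')[1]'hu1 = n₁ := rfl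
      rw [eu1] at hp1
      rw [gIdx_zero, gIdx_pos j one_ne_zero]
      cases n₁ with
      | U => exact hn1.elim
      | D => exact hn1.elim
      | L => exact hn1.elim
      | R => exact hn1.elim
      | N1 =>
        have hd0 : isDir d₀ := hudir d₀ (by simp)
        cases d₀ with
        | N1 => exact hd0.elim
        | N2 => exact hd0.elim
        | N3 => exact hd0.elim
        | N4 => exact hd0.elim
        | R =>
        simp only [varphi] at hvxy
        injection hvxy with hx1 hvxy
        injection hvxy with hy1 hvxy
        subst hx1; subst hy1
        obtain ⟨hx_ext, -⟩ := hq0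
        obtain ⟨hy_ext, hy_sep⟩ := hq1
        have hA : ((extPt q j).1 < (extPt q (j+1)).1) := hx_ext _ (mem_prevSet_ext q (by omega) (by omega))
        have hB : ((extPt q j).2 < (extPt q (j+1+1)).2) := hy_ext _ (mem_prevSet_ext q (by omega) (by omega))
        have hC := sepV_lt hy_sep (mem_pin_ext q (by omega))
          (mem_prevSet_ext q (show j < j+1 by omega) (by omega)) hA
        have hD := hC.2 _ (mem_prevSet_ext q (show j < j + 1 by omega) (by omega))
        obtain ⟨-, hquad⟩ := hp1
        have hE := hquad _ (mem_prevSet_ext p (show 0+1 < 1+1 by omega) (by omega))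
        obtain ⟨hE1, hE2⟩ := hE
        exact ⟨by omega, by omega⟩
        | L =>
        simp only [varphi] at hvxy
        injection hvxy with hx1 hvxy
        injection hvxy with hy1 hvxy
        subst hx1; subst hy1
        obtain ⟨hx_ext, -⟩ := hq0
        obtain ⟨hy_ext, hy_sep⟩ := hq1
        have hA : ((extPt q j).1 < (extPt q (j+1)).1) := hx_ext _ (mem_prevSet_ext q (by omega) (by omega))
        have hB : ((extPt q j).2 < (extPt q (j+1+1)).2) := hy_ext _ (mem_prevSet_ext q (by omega) (by omega))
        have hC := sepV_lt hy_sep (mem_pin_ext q (by omega))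
          (mem_prevSet_ext q (show j < j+1 by omega) (by omega)) hA
        have hD := hC.2 _ (mem_prevSet_ext q (show j < j + 1 by omega) (by omega))
        obtain ⟨-, hquad⟩ := hp1
        have hE := hquad _ (mem_prevSet_ext p (show 0+1 < 1+1 by omega) (by omega))
        obtain ⟨hE1, hE2⟩ := hE
        exact ⟨by omega, by omega⟩
        | U =>
        simp only [varphi] at hvxy
        injection hvxy with hx1 hvxy
        injection hvxy with hy1 hvxy
        subst hx1; subst hy1
        obtain ⟨hx_ext, -⟩ := hq0
        obtain ⟨hy_ext, hy_sep⟩ := hq1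
        have hA : ((extPt q j).2 < (extPt q (j+1)).2) := hx_ext _ (mem_prevSet_ext q (by omega) (by omega))
        have hB : ((extPt q j).1 < (extPt q (j+1+1)).1) := hy_ext _ (mem_prevSet_ext q (by omega) (by omega))
        have hC := sepH_lt hy_sep (mem_pin_ext q (by omega))
          (mem_prevSet_ext q (show j < j+1 by omega) (by omega)) hA
        have hD := hC.2 _ (mem_prevSet_ext q (show j < j + 1 by omega) (by omega))
        obtain ⟨-, hquad⟩ := hp1
        have hE := hquad _ (mem_prevSet_ext p (show 0+1 < 1+1 by omega) (by omega))
        obtain ⟨hE1, hE2⟩ := hE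
        exact ⟨by omega, by omega⟩
        | D =>
        simp only [varphi] at hvxy
        injection hvxy with hx1 hvxy
        injection hvxy with hy1 hvxy
        subst hx1; subst hy1
        obtain ⟨hx_ext, -⟩ := hq0
        obtain ⟨hy_ext, hy_sep⟩ := hq1
        have hA : ((extPt q j).2 < (extPt q (j+1)).2) := hx_ext _ (mem_prevSet_ext q (by omega) (by omega))
        have hB : ((extPt q j).1 < (extPt q (j+1+1)).1) := hy_ext _ (mem_prevSet_ext q (by omega) (by omega))
        have hC := sepH_lt hy_sep (mem_pin_ext q (by omega))
          (mem_prevSet_ext q (show j < j+1 by omega) (by omega)) hA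
        have hD := hC.2 _ (mem_prevSet_ext q (show j < j + 1 by omega) (by omega))
        obtain ⟨-, hquad⟩ := hp1
        have hE := hquad _ (mem_prevSet_ext p (show 0+1 < 1+1 by omega) (by omega))
        obtain ⟨hE1, hE2⟩ := hE
        exact ⟨by omega, by omega⟩
      | N2 =>
        have hd0 : isDir d₀ := hudir d₀ (by simp)
        cases d₀ with
        | N1 => exact hd0.elim
        | N2 => exact hd0.elim
        | N3 => exact hd0.elim
        | N4 => exact hd0.elim
        | R =>
        simp only [varphi] at hvxy
        injection hvxy with hx1 hvxy
        injection hvxy with hy1 hvxy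
        subst hx1; subst hy1
        obtain ⟨hx_ext, -⟩ := hq0
        obtain ⟨hy_ext, hy_sep⟩ := hq1
        have hA : ((extPt q (j+1)).1 < (extPt q j).1) := hx_ext _ (mem_prevSet_ext q (by omega) (by omega))
        have hB : ((extPt q j).2 < (extPt q (j+1+1)).2) := hy_ext _ (mem_prevSet_ext q (by omega) (by omega))
        have hC := sepV_gt hy_sep (mem_pin_ext q (by omega))
          (mem_prevSet_ext q (show j < j+1 by omega) (by omega)) hA
        have hD := hC.2 _ (mem_prevSet_ext q (show j < j + 1 by omega) (by omega))
        obtain ⟨-, hquad⟩ := hp1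
        have hE := hquad _ (mem_prevSet_ext p (show 0+1 < 1+1 by omega) (by omega))
        obtain ⟨hE1, hE2⟩ := hE
        exact ⟨by omega, by omega⟩
        | L =>
        simp only [varphi] at hvxy
        injection hvxy with hx1 hvxy
        injection hvxy with hy1 hvxy
        subst hx1; subst hy1
        obtain ⟨hx_ext, -⟩ := hq0
        obtain ⟨hy_ext, hy_sep⟩ := hq1
        have hA : ((extPt q (j+1)).1 < (extPt q j).1) := hx_ext _ (mem_prevSet_ext q (by omega) (by omega))
        have hB : ((extPt q j).2 < (extPt q (j+1+1)).2) := hy_ext _ (mem_prevSet_ext q (by omega) (by omega))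
        have hC := sepV_gt hy_sep (mem_pin_ext q (by omega))
          (mem_prevSet_ext q (show j < j+1 by omega) (by omega)) hA
        have hD := hC.2 _ (mem_prevSet_ext q (show j < j + 1 by omega) (by omega))
        obtain ⟨-, hquad⟩ := hp1
        have hE := hquad _ (mem_prevSet_ext p (show 0+1 < 1+1 by omega) (by omega))
        obtain ⟨hE1, hE2⟩ := hE
        exact ⟨by omega, by omega⟩
        | U =>
        simp only [varphi] at hvxy
        injection hvxy with hx1 hvxy
        injection hvxy with hy1 hvxy
        subst hx1; subst hy1
        obtain ⟨hx_ext, -⟩ := hq0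
        obtain ⟨hy_ext, hy_sep⟩ := hq1
        have hA : ((extPt q j).2 < (extPt q (j+1)).2) := hx_ext _ (mem_prevSet_ext q (by omega) (by omega))
        have hB : ((extPt q (j+1+1)).1 < (extPt q j).1) := hy_ext _ (mem_prevSet_ext q (by omega) (by omega))
        have hC := sepH_lt hy_sep (mem_pin_ext q (by omega))
          (mem_prevSet_ext q (show j < j+1 by omega) (by omega)) hA
        have hD := hC.2 _ (mem_prevSet_ext q (show j < j + 1 by omega) (by omega))
        obtain ⟨-, hquad⟩ := hp1
        have hE := hquad _ (mem_prevSet_ext p (show 0+1 < 1+1 by omega) (by omega))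
        obtain ⟨hE1, hE2⟩ := hE
        exact ⟨by omega, by omega⟩
        | D =>
        simp only [varphi] at hvxy
        injection hvxy with hx1 hvxy
        injection hvxy with hy1 hvxy
        subst hx1; subst hy1
        obtain ⟨hx_ext, -⟩ := hq0
        obtain ⟨hy_ext, hy_sep⟩ := hq1
        have hA : ((extPt q j).2 < (extPt q (j+1)).2) := hx_ext _ (mem_prevSet_ext q (by omega) (by omega))
        have hB : ((extPt q (j+1+1)).1 < (extPt q j).1) := hy_ext _ (mem_prevSet_ext q (by omega) (by omega))
        have hC := sepH_lt hy_sep (mem_pin_ext q (by omega))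
          (mem_prevSet_ext q (show j < j+1 by omega) (by omega)) hA
        have hD := hC.2 _ (mem_prevSet_ext q (show j < j + 1 by omega) (by omega))
        obtain ⟨-, hquad⟩ := hp1
        have hE := hquad _ (mem_prevSet_ext p (show 0+1 < 1+1 by omega) (by omega))
        obtain ⟨hE1, hE2⟩ := hE
        exact ⟨by omega, by omega⟩
      | N3 =>
        have hd0 : isDir d₀ := hudir d₀ (by simp)
        cases d₀ with
        | N1 => exact hd0.elim
        | N2 => exact hd0.elim
        | N3 => exact hd0.elim
        | N4 => exact hd0.elim
        | R =>
        simp only [varphi] at hvxy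
        injection hvxy with hx1 hvxy
        injection hvxy with hy1 hvxy
        subst hx1; subst hy1
        obtain ⟨hx_ext, -⟩ := hq0
        obtain ⟨hy_ext, hy_sep⟩ := hq1
        have hA : ((extPt q (j+1)).1 < (extPt q j).1) := hx_ext _ (mem_prevSet_ext q (by omega) (by omega))
        have hB : ((extPt q (j+1+1)).2 < (extPt q j).2) := hy_ext _ (mem_prevSet_ext q (by omega) (by omega))
        have hC := sepV_gt hy_sep (mem_pin_ext q (by omega))
          (mem_prevSet_ext q (show j < j+1 by omega) (by omega)) hA
        have hD := hC.2 _ (mem_prevSet_ext q (show j < j + 1 by omega) (by omega))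
        obtain ⟨-, hquad⟩ := hp1
        have hE := hquad _ (mem_prevSet_ext p (show 0+1 < 1+1 by omega) (by omega))
        obtain ⟨hE1, hE2⟩ := hE
        exact ⟨by omega, by omega⟩
        | L =>
        simp only [varphi] at hvxy
        injection hvxy with hx1 hvxy
        injection hvxy with hy1 hvxy
        subst hx1; subst hy1
        obtain ⟨hx_ext, -⟩ := hq0
        obtain ⟨hy_ext, hy_sep⟩ := hq1
        have hA : ((extPt q (j+1)).1 < (extPt q j).1) := hx_ext _ (mem_prevSet_ext q (by omega) (by omega))
        have hB : ((extPt q (j+1+1)).2 < (extPt q j).2) := hy_ext _ (mem_prevSet_ext q (by omega) (by omega))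
        have hC := sepV_gt hy_sep (mem_pin_ext q (by omega))
          (mem_prevSet_ext q (show j < j+1 by omega) (by omega)) hA
        have hD := hC.2 _ (mem_prevSet_ext q (show j < j + 1 by omega) (by omega))
        obtain ⟨-, hquad⟩ := hp1
        have hE := hquad _ (mem_prevSet_ext p (show 0+1 < 1+1 by omega) (by omega))
        obtain ⟨hE1, hE2⟩ := hE
        exact ⟨by omega, by omega⟩
        | U =>
        simp only [varphi] at hvxy
        injection hvxy with hx1 hvxy
        injection hvxy with hy1 hvxy
        subst hx1; subst hy1
        obtain ⟨hx_ext, -⟩ := hq0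
        obtain ⟨hy_ext, hy_sep⟩ := hq1
        have hA : ((extPt q (j+1)).2 < (extPt q j).2) := hx_ext _ (mem_prevSet_ext q (by omega) (by omega))
        have hB : ((extPt q (j+1+1)).1 < (extPt q j).1) := hy_ext _ (mem_prevSet_ext q (by omega) (by omega))
        have hC := sepH_gt hy_sep (mem_pin_ext q (by omega))
          (mem_prevSet_ext q (show j < j+1 by omega) (by omega)) hA
        have hD := hC.2 _ (mem_prevSet_ext q (show j < j + 1 by omega) (by omega))
        obtain ⟨-, hquad⟩ := hp1
        have hE := hquad _ (mem_prevSet_ext p (show 0+1 < 1+1 by omega) (by omega))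
        obtain ⟨hE1, hE2⟩ := hE
        exact ⟨by omega, by omega⟩
        | D =>
        simp only [varphi] at hvxy
        injection hvxy with hx1 hvxy
        injection hvxy with hy1 hvxy
        subst hx1; subst hy1
        obtain ⟨hx_ext, -⟩ := hq0
        obtain ⟨hy_ext, hy_sep⟩ := hq1
        have hA : ((extPt q (j+1)).2 < (extPt q j).2) := hx_ext _ (mem_prevSet_ext q (by omega) (by omega))
        have hB : ((extPt q (j+1+1)).1 < (extPt q j).1) := hy_ext _ (mem_prevSet_ext q (by omega) (by omega))
        have hC := sepH_gt hy_sep (mem_pin_ext q (by omega))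
          (mem_prevSet_ext q (show j < j+1 by omega) (by omega)) hA
        have hD := hC.2 _ (mem_prevSet_ext q (show j < j + 1 by omega) (by omega))
        obtain ⟨-, hquad⟩ := hp1
        have hE := hquad _ (mem_prevSet_ext p (show 0+1 < 1+1 by omega) (by omega))
        obtain ⟨hE1, hE2⟩ := hE
        exact ⟨by omega, by omega⟩
      | N4 =>
        have hd0 : isDir d₀ := hudir d₀ (by simp)
        cases d₀ with
        | N1 => exact hd0.elim
        | N2 => exact hd0.elim
        | N3 => exact hd0.elim
        | N4 => exact hd0.elim
        | R =>
        simp only [varphi] at hvxy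
        injection hvxy with hx1 hvxy
        injection hvxy with hy1 hvxy
        subst hx1; subst hy1
        obtain ⟨hx_ext, -⟩ := hq0
        obtain ⟨hy_ext, hy_sep⟩ := hq1
        have hA : ((extPt q j).1 < (extPt q (j+1)).1) := hx_ext _ (mem_prevSet_ext q (by omega) (by omega))
        have hB : ((extPt q (j+1+1)).2 < (extPt q j).2) := hy_ext _ (mem_prevSet_ext q (by omega) (by omega))
        have hC := sepV_lt hy_sep (mem_pin_ext q (by omega))
          (mem_prevSet_ext q (show j < j+1 by omega) (by omega)) hA
        have hD := hC.2 _ (mem_prevSet_ext q (show j < j + 1 by omega) (by omega))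
        obtain ⟨-, hquad⟩ := hp1
        have hE := hquad _ (mem_prevSet_ext p (show 0+1 < 1+1 by omega) (by omega))
        obtain ⟨hE1, hE2⟩ := hE
        exact ⟨by omega, by omega⟩
        | L =>
        simp only [varphi] at hvxy
        injection hvxy with hx1 hvxy
        injection hvxy with hy1 hvxy
        subst hx1; subst hy1
        obtain ⟨hx_ext, -⟩ := hq0
        obtain ⟨hy_ext, hy_sep⟩ := hq1
        have hA : ((extPt q j).1 < (extPt q (j+1)).1) := hx_ext _ (mem_prevSet_ext q (by omega) (by omega))
        have hB : ((extPt q (j+1+1)).2 < (extPt q j).2) := hy_ext _ (mem_prevSet_ext q (by omega) (by omega))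
        have hC := sepV_lt hy_sep (mem_pin_ext q (by omega))
          (mem_prevSet_ext q (show j < j+1 by omega) (by omega)) hA
        have hD := hC.2 _ (mem_prevSet_ext q (show j < j + 1 by omega) (by omega))
        obtain ⟨-, hquad⟩ := hp1
        have hE := hquad _ (mem_prevSet_ext p (show 0+1 < 1+1 by omega) (by omega))
        obtain ⟨hE1, hE2⟩ := hE
        exact ⟨by omega, by omega⟩
        | U =>
        simp only [varphi] at hvxy
        injection hvxy with hx1 hvxy
        injection hvxy with hy1 hvxy
        subst hx1; subst hy1
        obtain ⟨hx_ext, -⟩ := hq0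
        obtain ⟨hy_ext, hy_sep⟩ := hq1
        have hA : ((extPt q (j+1)).2 < (extPt q j).2) := hx_ext _ (mem_prevSet_ext q (by omega) (by omega))
        have hB : ((extPt q j).1 < (extPt q (j+1+1)).1) := hy_ext _ (mem_prevSet_ext q (by omega) (by omega))
        have hC := sepH_gt hy_sep (mem_pin_ext q (by omega))
          (mem_prevSet_ext q (show j < j+1 by omega) (by omega)) hA
        have hD := hC.2 _ (mem_prevSet_ext q (show j < j + 1 by omega) (by omega))
        obtain ⟨-, hquad⟩ := hp1
        have hE := hquad _ (mem_prevSet_ext p (show 0+1 < 1+1 by omega) (by omega))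
        obtain ⟨hE1, hE2⟩ := hE
        exact ⟨by omega, by omega⟩
        | D =>
        simp only [varphi] at hvxy
        injection hvxy with hx1 hvxy
        injection hvxy with hy1 hvxy
        subst hx1; subst hy1
        obtain ⟨hx_ext, -⟩ := hq0
        obtain ⟨hy_ext, hy_sep⟩ := hq1
        have hA : ((extPt q (j+1)).2 < (extPt q j).2) := hx_ext _ (mem_prevSet_ext q (by omega) (by omega))
        have hB : ((extPt q j).1 < (extPt q (j+1+1)).1) := hy_ext _ (mem_prevSet_ext q (by omega) (by omega))
        have hC := sepH_gt hy_sep (mem_pin_ext q (by omega))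
          (mem_prevSet_ext q (show j < j+1 by omega) (by omega)) hA
        have hD := hC.2 _ (mem_prevSet_ext q (show j < j + 1 by omega) (by omega))
        obtain ⟨-, hquad⟩ := hp1
        have hE := hquad _ (mem_prevSet_ext p (show 0+1 < 1+1 by omega) (by omega))
        obtain ⟨hE1, hE2⟩ := hE
        exact ⟨by omega, by omega⟩
    · -- inductive step, t ≥ 2
      have ht2 : 2 ≤ t := h2
      have htK' : t < (n₀ :: n₁ :: d₀ :: r').length := by omega
      have hb1 : j + t < (w₀ :: w₁ :: wr).length := by omega
      have hp_t := encodes_at hpE htK'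
      have hq_t := encodes_at hqE hb1
      have hww : (w₀ :: w₁ :: wr)[j+t]'hb1 = (n₀ :: n₁ :: d₀ :: r')[t]'htK' := by
        rw [hWget t htK hb1]
        exact (hiu t ht2 htK' (by simpa using htK')).symm
      rw [hww] at hq_t
      have hdir := hdir_t t ht2 htK'
      have IH1 := IH (t-1) (by omega) (by omega) (by omega) (t-2) (by omega)
      rw [gIdx_pos j (show t - 1 ≠ 0 by omega),
          show j + (t-1) + 1 = j + t from by omega,
          show t - 1 + 1 = t from by omega,
          show t - 2 + 1 = t - 1 from by omega] at IH1
      rw [gIdx_pos j (show t ≠ 0 by omega)]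
      cases hL : (n₀ :: n₁ :: d₀ :: r')[t]'htK' with
      | N1 => rw [hL] at hdir; exact hdir.elim
      | N2 => rw [hL] at hdir; exact hdir.elim
      | N3 => rw [hL] at hdir; exact hdir.elim
      | N4 => rw [hL] at hdir; exact hdir.elim
      | U =>
          rw [hL] at hp_t hq_t
          obtain ⟨hpe1, hpe2⟩ := hp_t
          obtain ⟨hqe1, hqe2⟩ := hq_t
          have g2p := hpe1 _ (mem_prevSet_ext p (show s+1 < t+1 by omega) (by omega))
          have g2q := hqe1 _ (mem_prevSet_ext q
            (show gIdx j s < j+t+1 by simp only [gIdx]; split <;> omega)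
            (by simp only [gIdx]; split <;> omega))
          have hne := (extPt_ne hpE.1 (show t-1 ≠ t by omega) (by omega) (by omega)).1
          have hpinp := mem_pin_ext p (show t < (n₀::n₁::d₀::r').length + 1 by omega)
          have hpinq := mem_pin_ext q (show j + t < (w₀::w₁::wr).length + 1 by omega)
          have homem := mem_prevSet_ext p (show t-1 < t by omega) (by omega)
          have hoq := mem_prevSet_ext q
            (show gIdx j (t-2) < j + t by simp only [gIdx]; split <;> omega)
            (by simp only [gIdx]; split <;> omega)
          rcases lt_or_gt_of_ne hne with hcmp | hcmp
          · have hP := sepV_lt hpe2 hpinp homem hcmp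
            have hql := IH1.1.mp hcmp
            have hQ := sepV_lt hqe2 hpinq hoq hql
            rcases Nat.lt_or_ge s (t-1) with hs | hs
            · have a1 := hP.2 _ (mem_prevSet_ext p (show s+1 < t by omega) (by omega))
              have a2 := hQ.2 _ (mem_prevSet_ext q
                (show gIdx j s < j + t by simp only [gIdx]; split <;> omega)
                (by simp only [gIdx]; split <;> omega))
              obtain ⟨hP1, -⟩ := hP
              obtain ⟨hQ1, -⟩ := hQ
              exact ⟨by omega, by omega⟩
            · have es : s + 1 = t := by omega
              have eg : gIdx j s = j + t := by
                rw [show s = t - 1 from by omega, gIdx_pos j (show t-1 ≠ 0 by omega)]; omega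
              rw [es] at g2p ⊢
              rw [eg] at g2q ⊢
              obtain ⟨hP1, -⟩ := hP
              obtain ⟨hQ1, -⟩ := hQ
              exact ⟨by omega, by omega⟩
          · have hneq := (extPt_ne hqE.1
              (show gIdx j (t-2) ≠ j + t by simp only [gIdx]; split <;> omega)
              (by simp only [gIdx]; split <;> omega) (by omega)).1
            have hql : (extPt q (j+t)).1 < (extPt q (gIdx j (t-2))).1 := by
              have hiff := IH1.1; omega
            have hP := sepV_gt hpe2 hpinp homem hcmp
            have hQ := sepV_gt hqe2 hpinq hoq hql
            rcases Nat.lt_or_ge s (t-1) with hs | hs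
            · have a1 := hP.2 _ (mem_prevSet_ext p (show s+1 < t by omega) (by omega))
              have a2 := hQ.2 _ (mem_prevSet_ext q
                (show gIdx j s < j + t by simp only [gIdx]; split <;> omega)
                (by simp only [gIdx]; split <;> omega))
              obtain ⟨hP1, -⟩ := hP
              obtain ⟨hQ1, -⟩ := hQ
              exact ⟨by omega, by omega⟩
            · have es : s + 1 = t := by omega
              have eg : gIdx j s = j + t := by
                rw [show s = t - 1 from by omega, gIdx_pos j (show t-1 ≠ 0 by omega)]; omega
              rw [es] at g2p ⊢
              rw [eg] at g2q ⊢
              obtain ⟨hP1, -⟩ := hP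
              obtain ⟨hQ1, -⟩ := hQ
              exact ⟨by omega, by omega⟩
      | D =>
          rw [hL] at hp_t hq_t
          obtain ⟨hpe1, hpe2⟩ := hp_t
          obtain ⟨hqe1, hqe2⟩ := hq_t
          have g2p := hpe1 _ (mem_prevSet_ext p (show s+1 < t+1 by omega) (by omega))
          have g2q := hqe1 _ (mem_prevSet_ext q
            (show gIdx j s < j+t+1 by simp only [gIdx]; split <;> omega)
            (by simp only [gIdx]; split <;> omega))
          have hne := (extPt_ne hpE.1 (show t-1 ≠ t by omega) (by omega) (by omega)).1
          have hpinp := mem_pin_ext p (show t < (n₀::n₁::d₀::r').length + 1 by omega)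
          have hpinq := mem_pin_ext q (show j + t < (w₀::w₁::wr).length + 1 by omega)
          have homem := mem_prevSet_ext p (show t-1 < t by omega) (by omega)
          have hoq := mem_prevSet_ext q
            (show gIdx j (t-2) < j + t by simp only [gIdx]; split <;> omega)
            (by simp only [gIdx]; split <;> omega)
          rcases lt_or_gt_of_ne hne with hcmp | hcmp
          · have hP := sepV_lt hpe2 hpinp homem hcmp
            have hql := IH1.1.mp hcmp
            have hQ := sepV_lt hqe2 hpinq hoq hql
            rcases Nat.lt_or_ge s (t-1) with hs | hs
            · have a1 := hP.2 _ (mem_prevSet_ext p (show s+1 < t by omega) (by omega))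
              have a2 := hQ.2 _ (mem_prevSet_ext q
                (show gIdx j s < j + t by simp only [gIdx]; split <;> omega)
                (by simp only [gIdx]; split <;> omega))
              obtain ⟨hP1, -⟩ := hP
              obtain ⟨hQ1, -⟩ := hQ
              exact ⟨by omega, by omega⟩
            · have es : s + 1 = t := by omega
              have eg : gIdx j s = j + t := by
                rw [show s = t - 1 from by omega, gIdx_pos j (show t-1 ≠ 0 by omega)]; omega
              rw [es] at g2p ⊢
              rw [eg] at g2q ⊢
              obtain ⟨hP1, -⟩ := hP
              obtain ⟨hQ1, -⟩ := hQ
              exact ⟨by omega, by omega⟩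
          · have hneq := (extPt_ne hqE.1
              (show gIdx j (t-2) ≠ j + t by simp only [gIdx]; split <;> omega)
              (by simp only [gIdx]; split <;> omega) (by omega)).1
            have hql : (extPt q (j+t)).1 < (extPt q (gIdx j (t-2))).1 := by
              have hiff := IH1.1; omega
            have hP := sepV_gt hpe2 hpinp homem hcmp
            have hQ := sepV_gt hqe2 hpinq hoq hql
            rcases Nat.lt_or_ge s (t-1) with hs | hs
            · have a1 := hP.2 _ (mem_prevSet_ext p (show s+1 < t by omega) (by omega))
              have a2 := hQ.2 _ (mem_prevSet_ext q
                (show gIdx j s < j + t by simp only [gIdx]; split <;> omega)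
                (by simp only [gIdx]; split <;> omega))
              obtain ⟨hP1, -⟩ := hP
              obtain ⟨hQ1, -⟩ := hQ
              exact ⟨by omega, by omega⟩
            · have es : s + 1 = t := by omega
              have eg : gIdx j s = j + t := by
                rw [show s = t - 1 from by omega, gIdx_pos j (show t-1 ≠ 0 by omega)]; omega
              rw [es] at g2p ⊢
              rw [eg] at g2q ⊢
              obtain ⟨hP1, -⟩ := hP
              obtain ⟨hQ1, -⟩ := hQ
              exact ⟨by omega, by omega⟩
      | L =>
          rw [hL] at hp_t hq_t
          obtain ⟨hpe1, hpe2⟩ := hp_t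
          obtain ⟨hqe1, hqe2⟩ := hq_t
          have g2p := hpe1 _ (mem_prevSet_ext p (show s+1 < t+1 by omega) (by omega))
          have g2q := hqe1 _ (mem_prevSet_ext q
            (show gIdx j s < j+t+1 by simp only [gIdx]; split <;> omega)
            (by simp only [gIdx]; split <;> omega))
          have hne := (extPt_ne hpE.1 (show t-1 ≠ t by omega) (by omega) (by omega)).2
          have hpinp := mem_pin_ext p (show t < (n₀::n₁::d₀::r').length + 1 by omega)
          have hpinq := mem_pin_ext q (show j + t < (w₀::w₁::wr).length + 1 by omega)
          have homem := mem_prevSet_ext p (show t-1 < t by omega) (by omega)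
          have hoq := mem_prevSet_ext q
            (show gIdx j (t-2) < j + t by simp only [gIdx]; split <;> omega)
            (by simp only [gIdx]; split <;> omega)
          rcases lt_or_gt_of_ne hne with hcmp | hcmp
          · have hP := sepH_lt hpe2 hpinp homem hcmp
            have hql := IH1.2.mp hcmp
            have hQ := sepH_lt hqe2 hpinq hoq hql
            rcases Nat.lt_or_ge s (t-1) with hs | hs
            · have a1 := hP.2 _ (mem_prevSet_ext p (show s+1 < t by omega) (by omega))
              have a2 := hQ.2 _ (mem_prevSet_ext q
                (show gIdx j s < j + t by simp only [gIdx]; split <;> omega)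
                (by simp only [gIdx]; split <;> omega))
              obtain ⟨hP1, -⟩ := hP
              obtain ⟨hQ1, -⟩ := hQ
              exact ⟨by omega, by omega⟩
            · have es : s + 1 = t := by omega
              have eg : gIdx j s = j + t := by
                rw [show s = t - 1 from by omega, gIdx_pos j (show t-1 ≠ 0 by omega)]; omega
              rw [es] at g2p ⊢
              rw [eg] at g2q ⊢
              obtain ⟨hP1, -⟩ := hP
              obtain ⟨hQ1, -⟩ := hQ
              exact ⟨by omega, by omega⟩
          · have hneq := (extPt_ne hqE.1
              (show gIdx j (t-2) ≠ j + t by simp only [gIdx]; split <;> omega)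
              (by simp only [gIdx]; split <;> omega) (by omega)).2
            have hql : (extPt q (j+t)).2 < (extPt q (gIdx j (t-2))).2 := by
              have hiff := IH1.2; omega
            have hP := sepH_gt hpe2 hpinp homem hcmp
            have hQ := sepH_gt hqe2 hpinq hoq hql
            rcases Nat.lt_or_ge s (t-1) with hs | hs
            · have a1 := hP.2 _ (mem_prevSet_ext p (show s+1 < t by omega) (by omega))
              have a2 := hQ.2 _ (mem_prevSet_ext q
                (show gIdx j s < j + t by simp only [gIdx]; split <;> omega)
                (by simp only [gIdx]; split <;> omega))
              obtain ⟨hP1, -⟩ := hP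
              obtain ⟨hQ1, -⟩ := hQ
              exact ⟨by omega, by omega⟩
            · have es : s + 1 = t := by omega
              have eg : gIdx j s = j + t := by
                rw [show s = t - 1 from by omega, gIdx_pos j (show t-1 ≠ 0 by omega)]; omega
              rw [es] at g2p ⊢
              rw [eg] at g2q ⊢
              obtain ⟨hP1, -⟩ := hP
              obtain ⟨hQ1, -⟩ := hQ
              exact ⟨by omega, by omega⟩
      | R =>
          rw [hL] at hp_t hq_t
          obtain ⟨hpe1, hpe2⟩ := hp_t
          obtain ⟨hqe1, hqe2⟩ := hq_t
          have g2p := hpe1 _ (mem_prevSet_ext p (show s+1 < t+1 by omega) (by omega))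
          have g2q := hqe1 _ (mem_prevSet_ext q
            (show gIdx j s < j+t+1 by simp only [gIdx]; split <;> omega)
            (by simp only [gIdx]; split <;> omega))
          have hne := (extPt_ne hpE.1 (show t-1 ≠ t by omega) (by omega) (by omega)).2
          have hpinp := mem_pin_ext p (show t < (n₀::n₁::d₀::r').length + 1 by omega)
          have hpinq := mem_pin_ext q (show j + t < (w₀::w₁::wr).length + 1 by omega)
          have homem := mem_prevSet_ext p (show t-1 < t by omega) (by omega)
          have hoq := mem_prevSet_ext q
            (show gIdx j (t-2) < j + t by simp only [gIdx]; split <;> omega)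
            (by simp only [gIdx]; split <;> omega)
          rcases lt_or_gt_of_ne hne with hcmp | hcmp
          · have hP := sepH_lt hpe2 hpinp homem hcmp
            have hql := IH1.2.mp hcmp
            have hQ := sepH_lt hqe2 hpinq hoq hql
            rcases Nat.lt_or_ge s (t-1) with hs | hs
            · have a1 := hP.2 _ (mem_prevSet_ext p (show s+1 < t by omega) (by omega))
              have a2 := hQ.2 _ (mem_prevSet_ext q
                (show gIdx j s < j + t by simp only [gIdx]; split <;> omega)
                (by simp only [gIdx]; split <;> omega))
              obtain ⟨hP1, -⟩ := hP
              obtain ⟨hQ1, -⟩ := hQ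
              exact ⟨by omega, by omega⟩
            · have es : s + 1 = t := by omega
              have eg : gIdx j s = j + t := by
                rw [show s = t - 1 from by omega, gIdx_pos j (show t-1 ≠ 0 by omega)]; omega
              rw [es] at g2p ⊢
              rw [eg] at g2q ⊢
              obtain ⟨hP1, -⟩ := hP
              obtain ⟨hQ1, -⟩ := hQ
              exact ⟨by omega, by omega⟩
          · have hneq := (extPt_ne hqE.1
              (show gIdx j (t-2) ≠ j + t by simp only [gIdx]; split <;> omega)
              (by simp only [gIdx]; split <;> omega) (by omega)).2
            have hql : (extPt q (j+t)).2 < (extPt q (gIdx j (t-2))).2 := by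
              have hiff := IH1.2; omega
            have hP := sepH_gt hpe2 hpinp homem hcmp
            have hQ := sepH_gt hqe2 hpinq hoq hql
            rcases Nat.lt_or_ge s (t-1) with hs | hs
            · have a1 := hP.2 _ (mem_prevSet_ext p (show s+1 < t by omega) (by omega))
              have a2 := hQ.2 _ (mem_prevSet_ext q
                (show gIdx j s < j + t by simp only [gIdx]; split <;> omega)
                (by simp only [gIdx]; split <;> omega))
              obtain ⟨hP1, -⟩ := hP
              obtain ⟨hQ1, -⟩ := hQ
              exact ⟨by omega, by omega⟩
            · have es : s + 1 = t := by omega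
              have eg : gIdx j s = j + t := by
                rw [show s = t - 1 from by omega, gIdx_pos j (show t-1 ≠ 0 by omega)]; omega
              rw [es] at g2p ⊢
              rw [eg] at g2q ⊢
              obtain ⟨hP1, -⟩ := hP
              obtain ⟨hQ1, -⟩ := hQ
              exact ⟨by omega, by omega⟩
  -- assemble the pattern embedding
  have hggb : ∀ s : Fin (n₀ :: n₁ :: d₀ :: r').length,
      gIdx j s.val - 1 < (w₀ :: w₁ :: wr).length := by
    intro s
    have := s.isLt
    simp only [gIdx]; split <;> omega
  have hq_gg : ∀ s : Fin (n₀ :: n₁ :: d₀ :: r').length,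
      q (Fin.succ ⟨gIdx j s.val - 1, hggb s⟩) = extPt q (gIdx j s.val) := by
    intro s
    have hb : gIdx j s.val < (w₀ :: w₁ :: wr).length + 1 := by
      have := s.isLt; simp only [gIdx]; split <;> omega
    rw [extPt_eq q hb]
    exact congrArg q (Fin.ext (by
      simp only [Fin.val_succ]
      have : 1 ≤ gIdx j s.val := by simp only [gIdx]; split <;> omega
      omega))
  have hp_s : ∀ s : Fin (n₀ :: n₁ :: d₀ :: r').length,
      p (Fin.succ s) = extPt p (s.val + 1) :=
    fun s => (extPt_eq p (Nat.succ_lt_succ s.isLt)).symm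
  have keyFin : ∀ s t : Fin (n₀ :: n₁ :: d₀ :: r').length,
      ((p (Fin.succ s)).1 < (p (Fin.succ t)).1 ↔
        (q (Fin.succ ⟨gIdx j s.val - 1, hggb s⟩)).1 <
        (q (Fin.succ ⟨gIdx j t.val - 1, hggb t⟩)).1) ∧
      ((p (Fin.succ s)).2 < (p (Fin.succ t)).2 ↔
        (q (Fin.succ ⟨gIdx j s.val - 1, hggb s⟩)).2 <
        (q (Fin.succ ⟨gIdx j t.val - 1, hggb t⟩)).2) := by
    intro s t
    rw [hp_s s, hp_s t, hq_gg s, hq_gg t]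
    rcases lt_trichotomy s.val t.val with hlt | heq | hgt
    · exact keyOrd t.val (by omega) (by have := t.isLt; omega) s.val hlt
    · rw [heq]
      exact ⟨iff_of_false (lt_irrefl _) (lt_irrefl _),
             iff_of_false (lt_irrefl _) (lt_irrefl _)⟩
    · have hk := keyOrd s.val (by omega) (by have := s.isLt; omega) t.val hgt
      obtain ⟨hk1, hk2⟩ := hk
      have hnep := extPt_ne hpE.1 (show t.val + 1 ≠ s.val + 1 by omega)
        (by have := t.isLt; omega) (by have := s.isLt; omega)
      have hneq2 := extPt_ne hqE.1
        (show gIdx j t.val ≠ gIdx j s.val by simp only [gIdx]; split <;> split <;> omega)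
        (by have := t.isLt; simp only [gIdx]; split <;> omega)
        (by have := s.isLt; simp only [gIdx]; split <;> omega)
      obtain ⟨hp1', hp2'⟩ := hnep
      obtain ⟨hq1', hq2'⟩ := hneq2
      exact ⟨by omega, by omega⟩
  refine ⟨fun i => e_w ⟨gIdx j (e_u.symm i).val - 1, hggb (e_u.symm i)⟩, ?_, ?_⟩
  · intro i1 i2 h12
    have h1 := (he_u (e_u.symm i1) (e_u.symm i2)).1
    simp only [Equiv.apply_symm_apply] at h1
    exact (he_w _ _).1.mp ((keyFin (e_u.symm i1) (e_u.symm i2)).1.mp (h1.mpr h12))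
  · intro i1 i2
    have h1 := (he_u (e_u.symm i1) (e_u.symm i2)).2
    simp only [Equiv.apply_symm_apply] at h1
    exact h1.symm.trans (((keyFin (e_u.symm i1) (e_u.symm i2)).2).trans (he_w _ _).2)
end PinWords
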